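/- For n ∈ Λ_{d,N} = ([0,2^N) ∩ Z)^d and k ∈ Λ_{d,N}^E (vectors k = (x, 2j) in (-2^N,2^N)^d ∩ Z^d with σ_{d,N}(k) ≥ 0 and even last coordinate), the additivity relation f_{d,N}(n + k) = f_{d,N}(n) + f_{d,N}(k) holds. -/
import Mathlib


/-- `f_{d,N}(x,y) = ⌊y/2⌋·2^{(2d-3)N+2} + 2σ_{d-1,N}(x) + (y mod 2)`, with `d = m + 1`. -/
def fdN (m N : ℕ) (p : (Fin m → ℤ) × ℤ) : ℤ :=
  (p.2 / 2) * 2 ^ ((2 * m - 1) * N + 2) +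
    2 * (∑ j : Fin m, p.1 j * 4 ^ ((j : ℕ) * N)) + p.2 % 2

/-- `σ_{d,N}` on pairs `(x, y) ∈ ℤ^{d-1} × ℤ`, i.e. `σ_{d-1,N}(x) + y · 4^{(d-1)N}`. -/
def sigmaFull (m N : ℕ) (p : (Fin m → ℤ) × ℤ) : ℤ :=
  (∑ j : Fin m, p.1 j * 4 ^ ((j : ℕ) * N)) + p.2 * 4 ^ (m * N)

/-- For `n ∈ Λ_{d,N} = ([0,2^N) ∩ ℤ)^d` and `k ∈ Λ_{d,N}^E` (in the box `(-2^N,2^N)^d`,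
last coordinate even, `σ_{d,N}(k) ≥ 0`), we have `f_{d,N}(n+k) = f_{d,N}(n) + f_{d,N}(k)`. -/
theorem fdN_additive (m N : ℕ) (hm : 1 ≤ m) (hN : 1 ≤ N)
    (n k : (Fin m → ℤ) × ℤ)
    (hn1 : ∀ j : Fin m, 0 ≤ n.1 j ∧ n.1 j < 2 ^ N) (hn2 : 0 ≤ n.2 ∧ n.2 < 2 ^ N)
    (hk1 : ∀ j : Fin m, |k.1 j| < 2 ^ N) (hk2 : |k.2| < 2 ^ N)
    (hkeven : Even k.2) (hksigma : 0 ≤ sigmaFull m N k) :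
    fdN m N (n + k) = fdN m N n + fdN m N k := by
  obtain ⟨t, ht⟩ := hkeven
  have h2 : k.2 = 2 * t := by omega
  simp only [fdN, Prod.fst_add, Prod.snd_add, Pi.add_apply, h2]
  rw [show (n.2 + 2 * t) / 2 = n.2 / 2 + t by omega,
      show (n.2 + 2 * t) % 2 = n.2 % 2 by omega,
      show (2 * t) / 2 = t by omega,
      show (2 * t) % 2 = 0 by omega,
      show (∑ j : Fin m, (n.1 j + k.1 j) * 4 ^ ((j : ℕ) * N))
          = (∑ j : Fin m, n.1 j * 4 ^ ((j : ℕ) * N))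
            + ∑ j : Fin m, k.1 j * 4 ^ ((j : ℕ) * N) by
        rw [← Finset.sum_add_distrib]
        exact Finset.sum_congr rfl fun _ _ => by ring]
  ring
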